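/- Assume O is finitely generated as a Z-module. The map sending a fractional O-ideal I to the tuple (e_1 I, …, e_n I) of fractional O_i-ideals induces a group isomorphism Pic(O) ≅ Pic(O_1) × … × Pic(O_n). -/

import Mathlib

set_option linter.unusedSectionVars false


/-!
Setting: `Z` is a Dedekind domain (not a field) with fraction field `Q`;
`K i` (for `i : Fin n`) are finite field extensions of `Q` and
`K = K₁ ⊕ ⋯ ⊕ Kₙ` is modelled as the product `∀ i, K i`;
`O i = integralClosure Z (K i)` and `O = integralClosure Z (∀ i, K i)`;
`V = K₁^(s 1) ⊕ ⋯ ⊕ Kₙ^(s n)` is modelled as `∀ i, Fin (s i) → K i`,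
a module over `∀ i, K i` with the componentwise diagonal action.
-/

open Submodule

section Paper

variable (Z : Type) [CommRing Z] [IsDomain Z] [IsDedekindDomain Z]
  (Q : Type) [Field Q] [Algebra Z Q] [IsFractionRing Z Q]
  {n : ℕ} (K : Fin n → Type) [∀ i, Field (K i)]
  [∀ i, Algebra Q (K i)] [∀ i, FiniteDimensional Q (K i)]
  [∀ i, Algebra Z (K i)] [∀ i, IsScalarTower Z Q (K i)]

/-- A *lattice* in a finite-dimensional `Q`-vector space `W`: a finitely generated
sub-`Z`-module of `W` which contains a `Q`-basis of `W` (equivalently, spans `W` over `Q`). -/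
def IsLatticeIn {W : Type} [AddCommGroup W] [Module Q W] [Module Z W]
    (L : Submodule Z W) : Prop :=
  L.FG ∧ Submodule.span Q (L : Set W) = ⊤

/-- An *order* in `K = K₁ ⊕ ⋯ ⊕ Kₙ`: a subring of `K` which is a lattice in `K`
(equivalently, a `Z`-subalgebra whose underlying `Z`-module is a lattice in `K`). -/
def IsOrderIn (R : Subalgebra Z (∀ i, K i)) : Prop :=
  IsLatticeIn Z Q (Subalgebra.toSubmodule R)

/-- A sub-`Z`-module `M` of a `(∀ i, K i)`-module is a *sub-`R`-module* if it is stable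
under the order `R`, i.e. `r • v ∈ M` for all `r ∈ R` and `v ∈ M`. -/
def IsStableUnder {W : Type} [AddCommGroup W] [Module Z W] [Module (∀ i, K i) W]
    (R : Subalgebra Z (∀ i, K i)) (M : Submodule Z W) : Prop :=
  ∀ r ∈ R, ∀ v ∈ M, r • v ∈ M

/-- `M` and `N` are *isomorphic as `R`-modules*: there is an additive isomorphism
`M ≃ N` commuting with the action of every element of `R`. -/
def ModIso {W W' : Type} [AddCommGroup W] [Module Z W] [Module (∀ i, K i) W]
    [AddCommGroup W'] [Module Z W'] [Module (∀ i, K i) W']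
    (R : Subalgebra Z (∀ i, K i)) (M : Submodule Z W) (N : Submodule Z W') : Prop :=
  ∃ e : M ≃+ N, ∀ r ∈ R, ∀ (v : W) (hv : v ∈ M) (hrv : r • v ∈ M),
    ((e ⟨r • v, hrv⟩ : N) : W') = r • ((e ⟨v, hv⟩ : N) : W')

variable (s : Fin n → ℕ)

/-- The sub-`Z`-module of `V = ⊕ᵢ Kᵢ^(sᵢ)` cut out coordinatewise by a family of
submodules `W i j ⊆ Kᵢ`. -/
def piLatticeV (W : ∀ i, Fin (s i) → Submodule Z (K i)) :
    Submodule Z (∀ i, Fin (s i) → K i) where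
  carrier := {v | ∀ i j, v i j ∈ W i j}
  add_mem' := fun hu hv i j => (W i j).add_mem (hu i j) (hv i j)
  zero_mem' := fun i j => (W i j).zero_mem
  smul_mem' := fun z _ hv i j => (W i j).smul_mem z (hv i j)

/-- The sub-`Z`-module `I₁ ⊕ ⋯ ⊕ Iₙ` of `K = K₁ ⊕ ⋯ ⊕ Kₙ`. -/
def piIdeal (I : ∀ i, Submodule Z (K i)) : Submodule Z (∀ i, K i) where
  carrier := {x | ∀ i, x i ∈ I i}
  add_mem' := fun hu hv i => (I i).add_mem (hu i) (hv i)
  zero_mem' := fun i => (I i).zero_mem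
  smul_mem' := fun z _ hx i => (I i).smul_mem z (hx i)

/-- A *fractional `Oᵢ`-ideal*: a finitely generated `Oᵢ`-stable sub-`Z`-module of `Kᵢ`
containing a `Q`-basis of `Kᵢ`, where `Oᵢ` is the integral closure of `Z` in `Kᵢ`. -/
def IsFracIdealAt (i : Fin n) (I : Submodule Z (K i)) : Prop :=
  I.FG ∧ Submodule.span Q (I : Set (K i)) = ⊤ ∧
    ∀ r ∈ integralClosure Z (K i), ∀ x ∈ I, r * x ∈ I

/-- A *fractional ideal of the order `S`* in `K`: a finitely generated `S`-stable
sub-`Z`-module of `K` containing a `Q`-basis of `K`. -/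
def IsFracIdealOf (S : Subalgebra Z (∀ i, K i)) (J : Submodule Z (∀ i, K i)) : Prop :=
  J.FG ∧ Submodule.span Q (J : Set (∀ i, K i)) = ⊤ ∧ ∀ r ∈ S, ∀ x ∈ J, r * x ∈ J

/-- The family `(O₁, …, Oₙ)` of maximal orders, as submodules. -/
def maxFam : ∀ i : Fin n, Submodule Z (K i) :=
  fun i => Subalgebra.toSubmodule (integralClosure Z (K i))

/-- The module `⊕ᵢ (Oᵢ^(sᵢ-1) ⊕ Iᵢ)` inside `V`: in the `i`-th block, the first
`sᵢ - 1` coordinates are `Oᵢ` and the last one is `Iᵢ`. -/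
def stdMod (I : ∀ i, Submodule Z (K i)) : Submodule Z (∀ i, Fin (s i) → K i) :=
  piLatticeV Z K s (fun i j =>
    if (j : ℕ) + 1 < s i then Subalgebra.toSubmodule (integralClosure Z (K i)) else I i)

/-- The `i`-th component `fᵢ` of the conductor `f = (R : O)`:
those `a ∈ Kᵢ` with `a·Oᵢ ⊆ R` (via the canonical embedding `Kᵢ → K`). -/
def conductorComp (R : Subalgebra Z (∀ i, K i)) (i : Fin n) : Submodule Z (K i) where
  carrier := {a | ∀ b ∈ integralClosure Z (K i), Pi.single i (a * b) ∈ R}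
  add_mem' := by
    intro x y hx hy b hb
    simpa [add_mul, Pi.single_add] using R.add_mem (hx b hb) (hy b hb)
  zero_mem' := by
    intro b hb
    simpa using R.zero_mem
  smul_mem' := by
    intro z x hx b hb
    simpa [smul_mul_assoc, Pi.single_smul] using R.smul_mem (hx b hb) z

/-- The conductor `f = (R : O) = {x ∈ K : x·O ⊆ R}` as a sub-`Z`-module of `K`. -/
def conductorSub (R : Subalgebra Z (∀ i, K i)) : Submodule Z (∀ i, K i) where
  carrier := {x | ∀ y ∈ integralClosure Z (∀ i, K i), x * y ∈ R}
  add_mem' := by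
    intro x y hx hy b hb
    simpa [add_mul] using R.add_mem (hx b hb) (hy b hb)
  zero_mem' := by
    intro b hb
    simpa using R.zero_mem
  smul_mem' := by
    intro z x hx b hb
    simpa [smul_mul_assoc] using R.smul_mem (hx b hb) z

/-- The module `⊕ᵢ (fᵢ^(sᵢ-1) ⊕ fᵢIᵢ)` inside `V`, where `f = f₁ ⊕ ⋯ ⊕ fₙ` is the
conductor of the order `R` in the maximal order. -/
def stdModLow (R : Subalgebra Z (∀ i, K i)) (I : ∀ i, Submodule Z (K i)) :
    Submodule Z (∀ i, Fin (s i) → K i) :=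
  piLatticeV Z K s (fun i j =>
    if (j : ℕ) + 1 < s i then conductorComp Z K R i else conductorComp Z K R i * I i)

/-- `M·S`, the `S`-module generated by `M` (e.g. `M·O`): the smallest sub-`Z`-module
containing all `r • v` with `r ∈ S` and `v ∈ M`. -/
def extendOrd {W : Type} [AddCommGroup W] [Module Z W] [Module (∀ i, K i) W]
    (S : Subalgebra Z (∀ i, K i)) (M : Submodule Z W) : Submodule Z W :=
  Submodule.span Z {x | ∃ r ∈ S, ∃ v ∈ M, x = r • v}

/-- An *`R`-linear isomorphism between the quotient modules* `B/A` and `D/C`: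
an additive isomorphism compatible with the induced action of every `r ∈ R`. -/
def QuotModIso {W W' : Type} [AddCommGroup W] [Module Z W] [Module (∀ i, K i) W]
    [AddCommGroup W'] [Module Z W'] [Module (∀ i, K i) W']
    (R : Subalgebra Z (∀ i, K i)) (B A : Submodule Z W) (D C : Submodule Z W') : Prop :=
  ∃ e : (↥B ⧸ A.comap B.subtype) ≃+ (↥D ⧸ C.comap D.subtype),
    ∀ r ∈ R, ∀ (v : W) (hv : v ∈ B) (hrv : r • v ∈ B)
      (w : W') (hw : w ∈ D) (hrw : r • w ∈ D),
      e (Submodule.Quotient.mk ⟨v, hv⟩) = Submodule.Quotient.mk ⟨w, hw⟩ →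
      e (Submodule.Quotient.mk ⟨r • v, hrv⟩) = Submodule.Quotient.mk ⟨r • w, hrw⟩

/-- The set `M_I`: sub-`R`-modules `N` of `V` with
`⊕ᵢ(fᵢ^(sᵢ-1) ⊕ fᵢIᵢ) ⊆ N ⊆ ⊕ᵢ(Oᵢ^(sᵢ-1) ⊕ Iᵢ)` and `N·O = ⊕ᵢ(Oᵢ^(sᵢ-1) ⊕ Iᵢ)`;
these are exactly the preimages `q_I⁻¹(Ñ)` of the sub-`R`-modules `Ñ` of `Q(I)`
with `Ñ·O = Q(I)`. -/
def MSet (R : Subalgebra Z (∀ i, K i)) (I : ∀ i, Submodule Z (K i)) :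
    Set (Submodule Z (∀ i, Fin (s i) → K i)) :=
  {N | stdModLow Z K s R I ≤ N ∧ N ≤ stdMod Z K s I ∧ IsStableUnder Z K R N ∧
    extendOrd Z K (integralClosure Z (∀ i, K i)) N = stdMod Z K s I}

/-- The set `q_I⁻¹(ψ̃(q_O(M)))`, where `ψ̃` is realised by the additive equivalence `e`
between `Q(O) = (⊕ᵢ(Oᵢ^(sᵢ-1) ⊕ Oᵢ))/(⊕ᵢ(fᵢ^(sᵢ-1) ⊕ fᵢOᵢ))` and `Q(I)`. -/
def psiSet (R : Subalgebra Z (∀ i, K i)) (I : ∀ i, Submodule Z (K i))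
    (e : (↥(stdMod Z K s (maxFam Z K)) ⧸
            (stdModLow Z K s R (maxFam Z K)).comap (stdMod Z K s (maxFam Z K)).subtype) ≃+
         (↥(stdMod Z K s I) ⧸ (stdModLow Z K s R I).comap (stdMod Z K s I).subtype))
    (M : Submodule Z (∀ i, Fin (s i) → K i)) : Set (∀ i, Fin (s i) → K i) :=
  {v | ∃ (hv : v ∈ stdMod Z K s I), ∃ m, ∃ (_ : m ∈ M) (hmO : m ∈ stdMod Z K s (maxFam Z K)),
    e (Submodule.Quotient.mk ⟨m, hmO⟩) = Submodule.Quotient.mk ⟨v, hv⟩}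


/-- An invertible fractional `O`-ideal of `K`. -/
def IsInvFracIdealO (J : Submodule Z (∀ i, K i)) : Prop :=
  IsFracIdealOf Z Q K (integralClosure Z (∀ i, K i)) J ∧
    ∃ J', IsFracIdealOf Z Q K (integralClosure Z (∀ i, K i)) J' ∧
      J * J' = Subalgebra.toSubmodule (integralClosure Z (∀ i, K i))

/-- An invertible fractional `Oᵢ`-ideal of `Kᵢ`. -/
def IsInvFracIdealAt (i : Fin n) (J : Submodule Z (K i)) : Prop :=
  IsFracIdealAt Z Q K i J ∧
    ∃ J', IsFracIdealAt Z Q K i J' ∧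
      J * J' = Subalgebra.toSubmodule (integralClosure Z (K i))

/-! ### Auxiliary lemmas -/

theorem aux_mem_iCl_pi {x : ∀ i, K i} :
    x ∈ integralClosure Z (∀ i, K i) ↔ ∀ i, x i ∈ integralClosure Z (K i) := by
  constructor
  · intro hx i
    exact IsIntegral.map (Pi.evalAlgHom Z K i) hx
  · intro hx
    choose p hmon hev using fun i => hx i
    refine ⟨∏ i, p i, Polynomial.monic_prod_of_monic _ _ fun i _ => hmon i, ?_⟩
    rw [← Polynomial.aeval_def]
    funext j
    have h1 : (Polynomial.aeval x (∏ i, p i)) j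
        = Polynomial.aeval (x j) (∏ i, p i) :=
      (Polynomial.aeval_algHom_apply (Pi.evalAlgHom Z K j) x (∏ i, p i)).symm
    rw [Pi.zero_apply, h1, map_prod]
    refine Finset.prod_eq_zero (Finset.mem_univ j) ?_
    rw [Polynomial.aeval_def]
    exact hev j

theorem aux_single_mem_iCl (i : Fin n) {r : K i} (hr : r ∈ integralClosure Z (K i)) :
    Pi.single i r ∈ integralClosure Z (∀ i, K i) := by
  rw [aux_mem_iCl_pi Z K]
  intro j
  rcases eq_or_ne j i with rfl | hj
  · simpa using hr
  · rw [Pi.single_eq_of_ne hj]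
    exact Subalgebra.zero_mem _

theorem aux_eq_sum_single (x : ∀ i, K i) : x = ∑ i, Pi.single i (x i) := by
  funext j
  rw [Finset.sum_apply]
  exact (Fintype.sum_pi_single j x).symm

theorem aux_single_mul (i : Fin n) (a : K i) (y : ∀ j, K j) :
    Pi.single i a * y = Pi.single i (a * y i) := by
  funext j
  rcases eq_or_ne j i with rfl | hj
  · simp
  · simp [Pi.single_eq_of_ne hj]

theorem aux_single_mul_single (i : Fin n) (a b : K i) :
    Pi.single i (a * b) = Pi.single i a * Pi.single i b := by
  rw [aux_single_mul K i a (Pi.single i b), Pi.single_eq_same]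

theorem aux_saturated {J : Submodule Z (∀ i, K i)}
    (hst : ∀ r ∈ integralClosure Z (∀ i, K i), ∀ x ∈ J, r * x ∈ J) :
    J = piIdeal Z K (fun i => J.map (LinearMap.proj i)) := by
  apply le_antisymm
  · exact fun x hx i => ⟨x, hx, rfl⟩
  · intro x hx
    rw [aux_eq_sum_single K x]
    refine Submodule.sum_mem _ fun i _ => ?_
    obtain ⟨y, hy, hyx⟩ := hx i
    have hx1 : Pi.single i (x i) = Pi.single i (1 : K i) * y := by
      rw [aux_single_mul, one_mul]
      exact congrArg _ hyx.symm
    rw [hx1]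
    exact hst _ (aux_single_mem_iCl Z K i (one_mem _)) y hy

theorem aux_map_proj_O (i : Fin n) :
    (Subalgebra.toSubmodule (integralClosure Z (∀ i, K i))).map
        (LinearMap.proj (R := Z) i)
      = Subalgebra.toSubmodule (integralClosure Z (K i)) := by
  apply le_antisymm
  · rintro _ ⟨y, hy, rfl⟩
    exact (aux_mem_iCl_pi Z K).1 hy i
  · intro a ha
    exact ⟨Pi.single i a, aux_single_mem_iCl Z K i ha, Pi.single_eq_same i a⟩

theorem aux_map_proj_mul (J J' : Submodule Z (∀ i, K i)) (i : Fin n) :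
    (J * J').map (LinearMap.proj (R := Z) i)
      = J.map (LinearMap.proj i) * J'.map (LinearMap.proj i) := by
  apply le_antisymm
  · rw [Submodule.map_le_iff_le_comap]
    refine Submodule.mul_le.2 fun x hx y hy => Submodule.mem_comap.2 ?_
    show x i * y i ∈ _
    exact Submodule.mul_mem_mul ⟨x, hx, rfl⟩ ⟨y, hy, rfl⟩
  · refine Submodule.mul_le.2 ?_
    rintro _ ⟨x, hx, rfl⟩ _ ⟨y, hy, rfl⟩
    exact ⟨x * y, Submodule.mul_mem_mul hx hy, rfl⟩

theorem aux_frac_proj {J : Submodule Z (∀ i, K i)}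
    (hJ : IsFracIdealOf Z Q K (integralClosure Z (∀ i, K i)) J) (i : Fin n) :
    IsFracIdealAt Z Q K i (J.map (LinearMap.proj i)) := by
  obtain ⟨hfg, hsp, hst⟩ := hJ
  refine ⟨hfg.map _, ?_, ?_⟩
  · have hsurj : Function.Surjective (LinearMap.proj (R := Q) (φ := K) i) :=
      fun a => ⟨Pi.single i a, Pi.single_eq_same i a⟩
    have hset : ((J.map (LinearMap.proj (R := Z) i)) : Set (K i))
        = (LinearMap.proj (R := Q) (φ := K) i) '' (J : Set (∀ j, K j)) := rfl
    rw [hset, Submodule.span_image, hsp, Submodule.map_top,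
      LinearMap.range_eq_top.2 hsurj]
  · rintro r hr _ ⟨y, hy, rfl⟩
    refine ⟨Pi.single i r * y, hst _ (aux_single_mem_iCl Z K i hr) y hy, ?_⟩
    show (Pi.single i r * y) i = r * y i
    rw [Pi.mul_apply, Pi.single_eq_same]

theorem aux_single_mem_piIdeal (Ic : ∀ i, Submodule Z (K i)) (i : Fin n)
    {a : K i} (ha : a ∈ Ic i) : Pi.single i a ∈ piIdeal Z K Ic := by
  intro j
  rcases eq_or_ne j i with rfl | hj
  · simpa using ha
  · rw [Pi.single_eq_of_ne hj]
    exact (Ic j).zero_mem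

theorem aux_map_proj_piIdeal (Ic : ∀ i, Submodule Z (K i)) (i : Fin n) :
    (piIdeal Z K Ic).map (LinearMap.proj (R := Z) i) = Ic i := by
  apply le_antisymm
  · rintro _ ⟨y, hy, rfl⟩
    exact hy i
  · intro a ha
    exact ⟨Pi.single i a, aux_single_mem_piIdeal Z K Ic i ha, Pi.single_eq_same i a⟩

theorem aux_piIdeal_fg (Ic : ∀ i, Submodule Z (K i)) (h : ∀ i, (Ic i).FG) :
    (piIdeal Z K Ic).FG := by
  have heq : piIdeal Z K Ic = ⨆ i, (Ic i).map (LinearMap.single Z K i) := by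
    apply le_antisymm
    · intro x hx
      rw [aux_eq_sum_single K x]
      exact Submodule.sum_mem _ fun i _ =>
        Submodule.mem_iSup_of_mem i ⟨x i, hx i, rfl⟩
    · refine iSup_le fun i => ?_
      rintro _ ⟨a, ha, rfl⟩
      exact aux_single_mem_piIdeal Z K Ic i ha
  rw [heq]
  exact Submodule.fg_iSup _ fun i => (h i).map _

theorem aux_piIdeal_span (Ic : ∀ i, Submodule Z (K i))
    (h : ∀ i, Submodule.span Q ((Ic i : Set (K i))) = ⊤) :
    Submodule.span Q ((piIdeal Z K Ic : Set (∀ i, K i))) = ⊤ := by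
  rw [eq_top_iff]
  intro x _
  rw [aux_eq_sum_single K x]
  refine Submodule.sum_mem _ fun i _ => ?_
  have hxi : x i ∈ Submodule.span Q ((Ic i : Set (K i))) := by
    rw [h i]; trivial
  have hmem : Pi.single i (x i)
      ∈ (Submodule.span Q ((Ic i : Set (K i)))).map (LinearMap.single Q K i) :=
    ⟨x i, hxi, rfl⟩
  rw [← Submodule.span_image] at hmem
  refine Submodule.span_mono ?_ hmem
  rintro _ ⟨a, ha, rfl⟩
  exact aux_single_mem_piIdeal Z K Ic i ha

theorem aux_piIdeal_mul (Ic Jc : ∀ i, Submodule Z (K i)) :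
    piIdeal Z K Ic * piIdeal Z K Jc = piIdeal Z K (fun i => Ic i * Jc i) := by
  apply le_antisymm
  · refine Submodule.mul_le.2 fun x hx y hy i => ?_
    exact Submodule.mul_mem_mul (hx i) (hy i)
  · intro x hx
    rw [aux_eq_sum_single K x]
    refine Submodule.sum_mem _ fun i _ => ?_
    have hle : (Ic i * Jc i).map (LinearMap.single Z K i)
        ≤ piIdeal Z K Ic * piIdeal Z K Jc := by
      rw [Submodule.map_le_iff_le_comap]
      refine Submodule.mul_le.2 fun a ha b hb => Submodule.mem_comap.2 ?_
      show Pi.single i (a * b) ∈ _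
      rw [aux_single_mul_single]
      exact Submodule.mul_mem_mul (aux_single_mem_piIdeal Z K Ic i ha)
        (aux_single_mem_piIdeal Z K Jc i hb)
    exact hle ⟨x i, hx i, rfl⟩

theorem aux_O_eq :
    Subalgebra.toSubmodule (integralClosure Z (∀ i, K i))
      = piIdeal Z K (fun i => Subalgebra.toSubmodule (integralClosure Z (K i))) := by
  ext x
  exact aux_mem_iCl_pi Z K

theorem aux_isUnit_pi {x : ∀ i, K i} : IsUnit x ↔ ∀ i, IsUnit (x i) := by
  constructor
  · rintro ⟨u, rfl⟩ i
    exact ⟨⟨u.val i, u.inv i, congrFun u.val_inv i, congrFun u.inv_val i⟩, rfl⟩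
  · intro h
    refine IsUnit.of_mul_eq_one (a := x) (fun i => ((h i).unit⁻¹ : Units (K i))) ?_
    funext i
    exact (h i).mul_val_inv

theorem aux_proj_comp_mulLeft (lam : ∀ i, K i) (i : Fin n) :
    (LinearMap.proj (R := Z) (φ := K) i).comp (LinearMap.mulLeft Z lam)
      = (LinearMap.mulLeft Z (lam i)).comp (LinearMap.proj i) := by
  ext x; rfl

/-- The map `I ↦ (e₁I, …, eₙI)` induces a group isomorphism
`Pic(O) ≅ Pic(O₁) × ⋯ × Pic(Oₙ)`: it sends invertible fractional `O`-ideals to tuples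
of invertible fractional `Oᵢ`-ideals, it is multiplicative, two invertible fractional
`O`-ideals are in the same class iff their components are componentwise in the same
class, and every tuple of invertible fractional `Oᵢ`-ideals arises from some invertible
fractional `O`-ideal. -/
theorem statement13
    (hZ : ¬ IsField Z)
    (hOfg : (Subalgebra.toSubmodule (integralClosure Z (∀ i, K i))).FG) :
    (∀ J : Submodule Z (∀ i, K i), IsInvFracIdealO Z Q K J →
      ∀ i, IsInvFracIdealAt Z Q K i (Submodule.map (LinearMap.proj i : (∀ j, K j) →ₗ[Z] K i) J)) ∧
    (∀ J J' : Submodule Z (∀ i, K i), IsInvFracIdealO Z Q K J → IsInvFracIdealO Z Q K J' →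
      ∀ i, Submodule.map (LinearMap.proj i : (∀ j, K j) →ₗ[Z] K i) (J * J') =
        Submodule.map (LinearMap.proj i : (∀ j, K j) →ₗ[Z] K i) J *
        Submodule.map (LinearMap.proj i : (∀ j, K j) →ₗ[Z] K i) J') ∧
    (∀ J J' : Submodule Z (∀ i, K i), IsInvFracIdealO Z Q K J → IsInvFracIdealO Z Q K J' →
      ((∃ lam : ∀ i, K i, IsUnit lam ∧ J = Submodule.map (LinearMap.mulLeft Z lam) J') ↔
        (∀ i, ∃ mu : K i, IsUnit mu ∧
          Submodule.map (LinearMap.proj i : (∀ j, K j) →ₗ[Z] K i) J =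
            Submodule.map (LinearMap.mulLeft Z mu)
              (Submodule.map (LinearMap.proj i : (∀ j, K j) →ₗ[Z] K i) J')))) ∧
    (∀ Jc : ∀ i, Submodule Z (K i), (∀ i, IsInvFracIdealAt Z Q K i (Jc i)) →
      ∃ J : Submodule Z (∀ i, K i), IsInvFracIdealO Z Q K J ∧
        ∀ i, Submodule.map (LinearMap.proj i : (∀ j, K j) →ₗ[Z] K i) J = Jc i) := by
  refine ⟨?_, ?_, ?_, ?_⟩
  · -- projections of invertible fractional O-ideals
    rintro J ⟨hJf, J', hJ'f, hmul⟩ i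
    refine ⟨aux_frac_proj Z Q K hJf i, J'.map (LinearMap.proj i),
      aux_frac_proj Z Q K hJ'f i, ?_⟩
    rw [← aux_map_proj_mul, hmul, aux_map_proj_O]
  · -- multiplicativity
    intro J J' _ _ i
    exact aux_map_proj_mul Z K J J' i
  · -- same class iff componentwise same class
    intro J J' hJ hJ'
    constructor
    · rintro ⟨lam, hlu, rfl⟩ i
      refine ⟨lam i, (aux_isUnit_pi (K := K)).1 hlu i, ?_⟩
      rw [← Submodule.map_comp, aux_proj_comp_mulLeft Z K lam i, Submodule.map_comp]
    · intro h
      choose mu hmuU hmuEq using h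
      refine ⟨fun i => mu i, (aux_isUnit_pi (K := K)).2 hmuU, ?_⟩
      obtain ⟨⟨_, _, hJst⟩, _⟩ := hJ
      obtain ⟨⟨_, _, hJ'st⟩, _⟩ := hJ'
      have hMst : ∀ r ∈ integralClosure Z (∀ i, K i),
          ∀ x ∈ J'.map (LinearMap.mulLeft Z (fun i => mu i)),
            r * x ∈ J'.map (LinearMap.mulLeft Z (fun i => mu i)) := by
        rintro r hr _ ⟨y, hy, rfl⟩
        exact ⟨r * y, hJ'st r hr y hy, mul_left_comm _ r y⟩
      rw [aux_saturated Z K hJst, aux_saturated Z K hMst]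
      refine congrArg _ (funext fun i => ?_)
      rw [← Submodule.map_comp, aux_proj_comp_mulLeft Z K _ i, Submodule.map_comp,
        ← hmuEq i]
  · -- surjectivity
    intro Jc hJc
    choose Jc' hJc' hJmul using fun i => (hJc i).2
    have hfracPi : ∀ (Ic : ∀ i, Submodule Z (K i)),
        (∀ i, IsFracIdealAt Z Q K i (Ic i)) →
        IsFracIdealOf Z Q K (integralClosure Z (∀ i, K i)) (piIdeal Z K Ic) := by
      intro Ic hIc
      refine ⟨aux_piIdeal_fg Z K Ic fun i => (hIc i).1,
        aux_piIdeal_span Z Q K Ic fun i => (hIc i).2.1, ?_⟩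
      intro r hr x hx i
      exact (hIc i).2.2 (r i) ((aux_mem_iCl_pi Z K).1 hr i) (x i) (hx i)
    refine ⟨piIdeal Z K Jc,
      ⟨hfracPi Jc fun i => (hJc i).1, piIdeal Z K Jc', hfracPi Jc' hJc', ?_⟩,
      fun i => aux_map_proj_piIdeal Z K Jc i⟩
    rw [aux_piIdeal_mul, aux_O_eq Z K]
    exact congrArg _ (funext fun i => hJmul i)

end Paper
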